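/- Let X and Y be two separable real Banach spaces, each satisfying condition (gF-2), and assume that closedAge(X) = closedAge(Y), i.e. a finite-dimensional normed space is finitely representable in X if and only if it is finitely representable in Y. Then X and Y are linearly isometric, i.e. there exists a surjective linear isometry from X onto Y. -/

import Mathlib

noncomputable section

open Real Metric

/-- A bundled finite-dimensional real normed space. -/
structure FinNormedSpace where
  carrier : Type
  [grp : NormedAddCommGroup carrier]
  [mod : NormedSpace ℝ carrier]
  [fd : FiniteDimensional ℝ carrier]

attribute [instance] FinNormedSpace.grp FinNormedSpace.mod FinNormedSpace.fd

instance : CoeSort FinNormedSpace Type := ⟨FinNormedSpace.carrier⟩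

/-- `T ∈ Emb_C(E, F)`. -/
def IsEmbC {E F : Type*} [NormedAddCommGroup E] [NormedSpace ℝ E]
    [NormedAddCommGroup F] [NormedSpace ℝ F] (C : ℝ) (T : E →L[ℝ] F) : Prop :=
  ∀ x : E, Real.exp (-C) * ‖x‖ ≤ ‖T x‖ ∧ ‖T x‖ ≤ Real.exp C * ‖x‖

/-- `T ∈ Emb(E, F)`, i.e. `T` is a linear isometric embedding. -/
def IsIsomEmb {E F : Type*} [NormedAddCommGroup E] [NormedSpace ℝ E]
    [NormedAddCommGroup F] [NormedSpace ℝ F] (T : E →L[ℝ] F) : Prop :=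
  ∀ x : E, ‖T x‖ = ‖x‖

/-- The continuous linear map underlying a surjective linear isometry. -/
def toCLM {X Y : Type*} [NormedAddCommGroup X] [NormedSpace ℝ X]
    [NormedAddCommGroup Y] [NormedSpace ℝ Y] (T : X ≃ₗᵢ[ℝ] Y) : X →L[ℝ] Y :=
  T.toLinearIsometry.toContinuousLinearMap

/-- `F` is finitely representable in `X`. -/
def FinRep (F : FinNormedSpace) (X : Type*) [NormedAddCommGroup X]
    [NormedSpace ℝ X] : Prop :=
  ∀ ε : ℝ, 0 < ε → ∃ T : F.carrier →L[ℝ] X, IsEmbC ε T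

/-- The inclusion of a submodule into a larger one, as a continuous linear map. -/
def inclCLM {X : Type*} [NormedAddCommGroup X] [NormedSpace ℝ X]
    {E F : Submodule ℝ X} (h : E ≤ F) : E →L[ℝ] F :=
  (Submodule.subtypeL E).codRestrict F (fun x => h x.2)

/-- Condition (gF-2). -/
def GF2 (X : Type*) [NormedAddCommGroup X] [NormedSpace ℝ X] : Prop :=
  ∀ (E : Submodule ℝ X), FiniteDimensional ℝ E → ∀ ε : ℝ, 0 < ε →
    ∃ (F : FinNormedSpace), FinRep F X ∧ ∃ φ : E →L[ℝ] F.carrier, IsEmbC ε φ ∧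
      ∃ δ : ℝ, 0 < δ ∧ ∀ (G : FinNormedSpace), FinRep G X →
        ∀ ψ : F.carrier →L[ℝ] G.carrier, IsEmbC δ ψ → ∀ η : ℝ, 0 < η →
          ∃ ι : G.carrier →L[ℝ] X, IsEmbC η ι ∧
            ‖E.subtypeL - ι.comp (ψ.comp φ)‖ < ε

namespace GFProof

section Basic

variable {E F G : Type*} [NormedAddCommGroup E] [NormedSpace ℝ E]
  [NormedAddCommGroup F] [NormedSpace ℝ F]
  [NormedAddCommGroup G] [NormedSpace ℝ G]

theorem _root_.IsEmbC.mono {c d : ℝ} {T : E →L[ℝ] F} (h : IsEmbC c T) (hcd : c ≤ d) :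
    IsEmbC d T := by
  intro x
  obtain ⟨h1, h2⟩ := h x
  refine ⟨le_trans ?_ h1, h2.trans ?_⟩
  · exact mul_le_mul_of_nonneg_right (Real.exp_le_exp.2 (neg_le_neg hcd)) (norm_nonneg x)
  · exact mul_le_mul_of_nonneg_right (Real.exp_le_exp.2 hcd) (norm_nonneg x)

theorem _root_.IsEmbC.comp {c d : ℝ} {S : F →L[ℝ] G} {T : E →L[ℝ] F}
    (hS : IsEmbC d S) (hT : IsEmbC c T) : IsEmbC (d + c) (S.comp T) := by
  intro x
  obtain ⟨h1, h2⟩ := hT x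
  obtain ⟨h3, h4⟩ := hS (T x)
  constructor
  · calc Real.exp (-(d + c)) * ‖x‖ = Real.exp (-d) * (Real.exp (-c) * ‖x‖) := by
          rw [← mul_assoc, ← Real.exp_add]; ring_nf
    _ ≤ Real.exp (-d) * ‖T x‖ := by
          exact mul_le_mul_of_nonneg_left h1 (Real.exp_pos _).le
    _ ≤ ‖S (T x)‖ := h3
  · calc ‖S (T x)‖ ≤ Real.exp d * ‖T x‖ := h4
    _ ≤ Real.exp d * (Real.exp c * ‖x‖) := mul_le_mul_of_nonneg_left h2 (Real.exp_pos _).le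
    _ = Real.exp (d + c) * ‖x‖ := by rw [← mul_assoc, ← Real.exp_add]

theorem _root_.IsEmbC.norm_le {c : ℝ} {T : E →L[ℝ] F} (h : IsEmbC c T) :
    ‖T‖ ≤ Real.exp c :=
  T.opNorm_le_bound (Real.exp_pos c).le fun x => (h x).2

theorem _root_.IsEmbC.norm_apply_le {c : ℝ} (hc : c ≤ 2) {T : E →L[ℝ] F} (h : IsEmbC c T)
    (x : E) : ‖T x‖ ≤ 8 * ‖x‖ := by
  refine (h x).2.trans (mul_le_mul_of_nonneg_right ?_ (norm_nonneg x))
  calc Real.exp c ≤ Real.exp 2 := Real.exp_le_exp.2 hc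
  _ ≤ 8 := by
      rw [show (2:ℝ) = 1 + 1 by norm_num, Real.exp_add]
      nlinarith [Real.exp_one_lt_d9, Real.exp_pos 1]

theorem exp_two_le_eight : Real.exp 2 ≤ 8 := by
  rw [show (2:ℝ) = 1 + 1 by norm_num, Real.exp_add]
  nlinarith [Real.exp_one_lt_d9, Real.exp_pos 1]

variable {X : Type*} [NormedAddCommGroup X] [NormedSpace ℝ X]

theorem isEmbC_codRestrict {c : ℝ} {T : E →L[ℝ] X} (h : IsEmbC c T)
    (p : Submodule ℝ X) (hp : ∀ v, T v ∈ p) : IsEmbC c (T.codRestrict p hp) := by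
  intro x
  simpa using h x

end Basic

section Construction

variable {X Y : Type*} [NormedAddCommGroup X] [NormedSpace ℝ X]
  [NormedAddCommGroup Y] [NormedSpace ℝ Y]

/-- The state after cycle `n` of the back-and-forth construction. -/
structure St (x : ℕ → X) (y : ℕ → Y) (n : ℕ) where
  A : Submodule ℝ X
  instA : FiniteDimensional ℝ A
  B : Submodule ℝ Y
  instB : FiniteDimensional ℝ B
  F' : FinNormedSpace
  φ' : B →L[ℝ] F'.carrier
  β : ℝ
  hβ0 : 0 < β
  hβ : β ≤ (1/2)^n
  hφ' : IsEmbC β φ'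
  δ' : ℝ
  hδ'0 : 0 < δ'
  guard : ∀ G : FinNormedSpace, FinRep G Y → ∀ ψ : F'.carrier →L[ℝ] G.carrier,
    IsEmbC δ' ψ → ∀ η : ℝ, 0 < η → ∃ ι : G.carrier →L[ℝ] Y, IsEmbC η ι ∧
      ‖B.subtypeL - ι.comp (ψ.comp φ')‖ < β
  ι : F'.carrier →L[ℝ] X
  η : ℝ
  hη0 : 0 < η
  hη : η ≤ (1/2)^n
  hηδ' : η ≤ δ' / 2
  hι : IsEmbC η ι
  hxA : x n ∈ A
  hyB : y n ∈ B
  hsurj : ∃ h : A →L[ℝ] B, ‖h‖ ≤ 8 ∧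
    ‖A.subtypeL - ι.comp (φ'.comp h)‖ ≤ (1/2)^n

end Construction

end GFProof

namespace GFProof

section Step

variable {X Y : Type*} [NormedAddCommGroup X] [NormedSpace ℝ X]
  [NormedAddCommGroup Y] [NormedSpace ℝ Y]

theorem half_pow_le_one (n : ℕ) : ((1:ℝ)/2)^n ≤ 1 :=
  pow_le_one₀ (by norm_num) (by norm_num)

theorem half_pow_pos (n : ℕ) : (0:ℝ) < (1/2)^n := by positivity

set_option maxHeartbeats 2000000 in
theorem step_ex (hX : GF2 X) (hY : GF2 Y)
    (hAge : ∀ F : FinNormedSpace, FinRep F X ↔ FinRep F Y)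
    (x : ℕ → X) (y : ℕ → Y) (n : ℕ) (s : St x y n) :
    ∃ s' : St x y (n+1), s.A ≤ s'.A ∧ s.B ≤ s'.B ∧
      ∀ b : s.B, ∀ hb : (b : Y) ∈ s'.B,
        ‖s'.ι (s'.φ' ⟨(b : Y), hb⟩) - s.ι (s.φ' b)‖ ≤ 16 * (1/2)^n * ‖(b : Y)‖ := by
  haveI := s.instA
  haveI := s.instB
  classical
  -- the new X-side subspace A'
  set A' : Submodule ℝ X :=
    s.A ⊔ LinearMap.range (s.ι : s.F'.carrier →ₗ[ℝ] X) ⊔ Submodule.span ℝ {x (n+1)}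
    with hA'def
  have hAA' : s.A ≤ A' := le_trans le_sup_left le_sup_left
  have hιA' : ∀ v : s.F'.carrier, s.ι v ∈ A' := by
    intro v
    have h1 : LinearMap.range (s.ι : s.F'.carrier →ₗ[ℝ] X) ≤ A' :=
      le_trans le_sup_right le_sup_left
    exact h1 ⟨v, rfl⟩
  have hxA' : x (n+1) ∈ A' := by
    have h1 : Submodule.span ℝ {x (n+1)} ≤ A' := le_sup_right
    exact h1 (Submodule.mem_span_singleton_self _)
  -- apply GF2 X at A'
  set α : ℝ := min (s.δ' / 2) ((1/2)^(n+1)) with hαdef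
  have hα0 : 0 < α := lt_min (by linarith [s.hδ'0]) (half_pow_pos _)
  have hα1 : α ≤ (1/2)^(n+1) := min_le_right _ _
  obtain ⟨F, hFX, φ, hφ, δ, hδ0, guardX⟩ := hX A' inferInstance α hα0
  -- corestrict s.ι to A'
  set ιr : s.F'.carrier →L[ℝ] A' := s.ι.codRestrict A' hιA' with hιrdef
  have hιr : IsEmbC s.η ιr := isEmbC_codRestrict s.hι A' hιA'
  -- the guarded map out of s.F'
  set ψ' : s.F'.carrier →L[ℝ] F.carrier := φ.comp ιr with hψ'def
  have hψ' : IsEmbC s.δ' ψ' := by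
    refine (IsEmbC.comp hφ hιr).mono ?_
    have h1 := s.hηδ'
    have h2 : α ≤ s.δ' / 2 := min_le_left _ _
    linarith
  -- use the Y-side guard at s.B to get a well-positioned copy of F in Y
  set γ : ℝ := min (δ / 2) 1 with hγdef
  have hγ0 : 0 < γ := lt_min (by linarith) one_pos
  obtain ⟨m, hm, hmpos⟩ := s.guard F ((hAge F).mp hFX) ψ' hψ' γ hγ0
  -- the new Y-side subspace B'
  set B' : Submodule ℝ Y :=
    s.B ⊔ LinearMap.range (m : F.carrier →ₗ[ℝ] Y) ⊔ Submodule.span ℝ {y (n+1)}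
    with hB'def
  have hBB' : s.B ≤ B' := le_trans le_sup_left le_sup_left
  have hmB' : ∀ v : F.carrier, m v ∈ B' := by
    intro v
    have h1 : LinearMap.range (m : F.carrier →ₗ[ℝ] Y) ≤ B' :=
      le_trans le_sup_right le_sup_left
    exact h1 ⟨v, rfl⟩
  have hyB' : y (n+1) ∈ B' := by
    have h1 : Submodule.span ℝ {y (n+1)} ≤ B' := le_sup_right
    exact h1 (Submodule.mem_span_singleton_self _)
  set mr : F.carrier →L[ℝ] B' := m.codRestrict B' hmB' with hmrdef
  have hmr : IsEmbC γ mr := isEmbC_codRestrict hm B' hmB'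
  -- apply GF2 Y at B'
  set β' : ℝ := min (δ / 2) ((1/2)^(n+1)) with hβ'def
  have hβ'0 : 0 < β' := lt_min (by linarith) (half_pow_pos _)
  obtain ⟨F'', hF''Y, φ'', hφ'', δ'', hδ''0, guardY⟩ := hY B' inferInstance β' hβ'0
  -- the guarded map out of F
  set ψ : F.carrier →L[ℝ] F''.carrier := φ''.comp mr with hψdef
  have hψ : IsEmbC δ ψ := by
    refine (IsEmbC.comp hφ'' hmr).mono ?_
    have h1 : β' ≤ δ / 2 := min_le_left _ _
    have h2 : γ ≤ δ / 2 := min_le_left _ _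
    linarith
  -- use the X-side guard to realize F'' in X over A'
  set η' : ℝ := min (δ'' / 2) ((1/2)^(n+1)) with hη'def
  have hη'0 : 0 < η' := lt_min (by linarith) (half_pow_pos _)
  obtain ⟨ι', hι', hι'near⟩ := guardX F'' ((hAge F'').mpr hF''Y) ψ hψ η' hη'0
  -- assemble the new state
  have hsurj' : ∃ h : A' →L[ℝ] B', ‖h‖ ≤ 8 ∧
      ‖A'.subtypeL - ι'.comp (φ''.comp h)‖ ≤ (1/2)^(n+1) := by
    refine ⟨mr.comp φ, ?_, ?_⟩
    · refine le_trans (IsEmbC.norm_le (IsEmbC.comp hmr hφ)) ?_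
      refine le_trans (Real.exp_le_exp.2 ?_) exp_two_le_eight
      have h3 : γ ≤ 1 := min_le_right _ _
      have h4 : α ≤ 1 := hα1.trans (half_pow_le_one _)
      linarith
    · have heq : ι'.comp (φ''.comp (mr.comp φ)) = ι'.comp (ψ.comp φ) := by
        rw [hψdef, ContinuousLinearMap.comp_assoc]
      rw [heq]
      exact hι'near.le.trans hα1
  refine ⟨{ A := A', instA := inferInstance, B := B', instB := inferInstance,
            F' := F'', φ' := φ'', β := β', hβ0 := hβ'0,
            hβ := min_le_right _ _, hφ' := hφ'',
            δ' := δ'', hδ'0 := hδ''0, guard := guardY,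
            ι := ι', η := η', hη0 := hη'0, hη := min_le_right _ _,
            hηδ' := min_le_left _ _, hι := hι',
            hxA := hxA', hyB := hyB', hsurj := hsurj' }, hAA', hBB', ?_⟩
  -- coherence estimate
  intro b hb
  set a : A' := ιr (s.φ' b) with hadef
  have haX : (a : X) = s.ι (s.φ' b) := rfl
  -- positioning estimate for m, pointwise
  have h6 : ‖(b : Y) - m (φ a)‖ ≤ s.β * ‖(b : Y)‖ := by
    have h := (s.B.subtypeL - m.comp (ψ'.comp s.φ')).le_opNorm b
    have heval : (s.B.subtypeL - m.comp (ψ'.comp s.φ')) b = (b : Y) - m (φ a) := by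
      simp [hψ'def, hadef, ContinuousLinearMap.sub_apply]
    rw [heval] at h
    refine h.trans ?_
    rw [Submodule.coe_norm]
    exact mul_le_mul_of_nonneg_right hmpos.le (norm_nonneg _)
  -- realization estimate, pointwise
  have h10 : ‖(a : X) - ι' (ψ (φ a))‖ ≤ α * ‖(a : X)‖ := by
    have h := (A'.subtypeL - ι'.comp (ψ.comp φ)).le_opNorm a
    have heval : (A'.subtypeL - ι'.comp (ψ.comp φ)) a = (a : X) - ι' (ψ (φ a)) := by
      simp [ContinuousLinearMap.sub_apply]
    rw [heval] at h
    refine h.trans ?_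
    rw [Submodule.coe_norm]
    exact mul_le_mul_of_nonneg_right hι'near.le (norm_nonneg _)
  -- bound on ‖a‖
  have hanorm : ‖(a : X)‖ ≤ 8 * ‖(b : Y)‖ := by
    have hcomp : IsEmbC (s.η + s.β) (s.ι.comp s.φ') := IsEmbC.comp s.hι s.hφ'
    have h2 : s.η + s.β ≤ 2 := by
      have h3 := s.hη.trans (half_pow_le_one n)
      have h4 := s.hβ.trans (half_pow_le_one n)
      linarith
    have h5 := IsEmbC.norm_apply_le h2 hcomp b
    rw [haX]
    simpa [Submodule.coe_norm] using h5
  -- main decomposition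
  have hkey : ι' (φ'' ⟨(b : Y), hb⟩) - s.ι (s.φ' b)
      = ι' (φ'' (⟨(b : Y), hb⟩ - mr (φ a))) + (ι' (ψ (φ a)) - (a : X)) := by
    have h1 : ψ (φ a) = φ'' (mr (φ a)) := rfl
    rw [h1, map_sub, map_sub, haX]
    abel
  have hdiff : ‖(⟨(b : Y), hb⟩ : B') - mr (φ a)‖ ≤ s.β * ‖(b : Y)‖ := by
    rw [Submodule.coe_norm]
    have h1 : (((⟨(b : Y), hb⟩ : B') - mr (φ a) : B') : Y) = (b : Y) - m (φ a) := by
      simp [hmrdef]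
    rw [h1]
    exact h6
  have hfirst : ‖ι' (φ'' (⟨(b : Y), hb⟩ - mr (φ a)))‖ ≤ 8 * (s.β * ‖(b : Y)‖) := by
    have hcomp : IsEmbC (η' + β') (ι'.comp φ'') := IsEmbC.comp hι' hφ''
    have h2 : η' + β' ≤ 2 := by
      have h3 : η' ≤ 1 := (min_le_right _ _).trans (half_pow_le_one _)
      have h4 : β' ≤ 1 := (min_le_right _ _).trans (half_pow_le_one _)
      linarith
    have h5 := IsEmbC.norm_apply_le h2 hcomp (⟨(b : Y), hb⟩ - mr (φ a))
    simp only [ContinuousLinearMap.comp_apply] at h5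
    refine h5.trans ?_
    exact mul_le_mul_of_nonneg_left hdiff (by norm_num)
  calc ‖ι' (φ'' ⟨(b : Y), hb⟩) - s.ι (s.φ' b)‖
      ≤ ‖ι' (φ'' (⟨(b : Y), hb⟩ - mr (φ a)))‖ + ‖ι' (ψ (φ a)) - (a : X)‖ := by
        rw [hkey]; exact norm_add_le _ _
    _ ≤ 8 * (s.β * ‖(b : Y)‖) + α * ‖(a : X)‖ := by
        refine add_le_add hfirst ?_
        rw [norm_sub_rev]
        exact h10
    _ ≤ 8 * ((1/2)^n * ‖(b : Y)‖) + (1/2)^(n+1) * (8 * ‖(b : Y)‖) := by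
        refine add_le_add ?_ ?_
        · exact mul_le_mul_of_nonneg_left
            (mul_le_mul_of_nonneg_right s.hβ (norm_nonneg _)) (by norm_num)
        · exact mul_le_mul hα1 hanorm (norm_nonneg _) (half_pow_pos _).le
    _ ≤ 16 * (1/2)^n * ‖(b : Y)‖ := by
        rw [pow_succ]
        nlinarith [norm_nonneg (b : Y), half_pow_pos n]

end Step

end GFProof

namespace GFProof

section Init

variable {X Y : Type*} [NormedAddCommGroup X] [NormedSpace ℝ X]
  [NormedAddCommGroup Y] [NormedSpace ℝ Y]

set_option maxHeartbeats 2000000 in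
theorem init_ex (hX : GF2 X) (hY : GF2 Y)
    (hAge : ∀ F : FinNormedSpace, FinRep F X ↔ FinRep F Y)
    (x : ℕ → X) (y : ℕ → Y) : Nonempty (St x y 0) := by
  classical
  set A' : Submodule ℝ X := Submodule.span ℝ {x 0} with hA'def
  have hxA' : x 0 ∈ A' := Submodule.mem_span_singleton_self _
  obtain ⟨F, hFX, φ, hφ, δ, hδ0, guardX⟩ := hX A' inferInstance 1 one_pos
  set γ : ℝ := min (δ / 2) 1 with hγdef
  have hγ0 : 0 < γ := lt_min (by linarith) one_pos
  obtain ⟨m, hm⟩ := (hAge F).mp hFX γ hγ0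
  set B' : Submodule ℝ Y :=
    LinearMap.range (m : F.carrier →ₗ[ℝ] Y) ⊔ Submodule.span ℝ {y 0} with hB'def
  have hmB' : ∀ v : F.carrier, m v ∈ B' := by
    intro v
    have h1 : LinearMap.range (m : F.carrier →ₗ[ℝ] Y) ≤ B' := le_sup_left
    exact h1 ⟨v, rfl⟩
  have hyB' : y 0 ∈ B' := by
    have h1 : Submodule.span ℝ {y 0} ≤ B' := le_sup_right
    exact h1 (Submodule.mem_span_singleton_self _)
  set mr : F.carrier →L[ℝ] B' := m.codRestrict B' hmB' with hmrdef
  have hmr : IsEmbC γ mr := isEmbC_codRestrict hm B' hmB'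
  set β' : ℝ := min (δ / 2) 1 with hβ'def
  have hβ'0 : 0 < β' := lt_min (by linarith) one_pos
  obtain ⟨F'', hF''Y, φ'', hφ'', δ'', hδ''0, guardY⟩ := hY B' inferInstance β' hβ'0
  set ψ : F.carrier →L[ℝ] F''.carrier := φ''.comp mr with hψdef
  have hψ : IsEmbC δ ψ := by
    refine (IsEmbC.comp hφ'' hmr).mono ?_
    have h1 : β' ≤ δ / 2 := min_le_left _ _
    have h2 : γ ≤ δ / 2 := min_le_left _ _
    linarith
  set η' : ℝ := min (δ'' / 2) 1 with hη'def
  have hη'0 : 0 < η' := lt_min (by linarith) one_pos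
  obtain ⟨ι', hι', hι'near⟩ := guardX F'' ((hAge F'').mpr hF''Y) ψ hψ η' hη'0
  have hsurj' : ∃ h : A' →L[ℝ] B', ‖h‖ ≤ 8 ∧
      ‖A'.subtypeL - ι'.comp (φ''.comp h)‖ ≤ (1/2)^0 := by
    refine ⟨mr.comp φ, ?_, ?_⟩
    · refine le_trans (IsEmbC.norm_le (IsEmbC.comp hmr hφ)) ?_
      refine le_trans (Real.exp_le_exp.2 ?_) exp_two_le_eight
      have h3 : γ ≤ 1 := min_le_right _ _
      linarith
    · have heq : ι'.comp (φ''.comp (mr.comp φ)) = ι'.comp (ψ.comp φ) := by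
        rw [hψdef, ContinuousLinearMap.comp_assoc]
      rw [heq]
      simpa using hι'near.le
  exact ⟨{ A := A', instA := inferInstance, B := B', instB := inferInstance,
           F' := F'', φ' := φ'', β := β', hβ0 := hβ'0,
           hβ := le_trans (min_le_right _ _) (by norm_num), hφ' := hφ'',
           δ' := δ'', hδ'0 := hδ''0, guard := guardY,
           ι := ι', η := η', hη0 := hη'0,
           hη := le_trans (min_le_right _ _) (by norm_num),
           hηδ' := min_le_left _ _, hι := hι',
           hxA := hxA', hyB := hyB', hsurj := hsurj' }⟩

end Init

end GFProof

namespace GFProof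

section Limit

open Filter Topology

variable {X Y : Type*} [NormedAddCommGroup X] [NormedSpace ℝ X] [CompleteSpace X]
  [NormedAddCommGroup Y] [NormedSpace ℝ Y] [CompleteSpace Y]
variable (hX : GF2 X) (hY : GF2 Y)
  (hAge : ∀ F : FinNormedSpace, FinRep F X ↔ FinRep F Y)
  (x : ℕ → X) (y : ℕ → Y)

/-- The inductively constructed sequence of states. -/
noncomputable def seq : ∀ n : ℕ, St x y n := fun n =>
  Nat.rec (motive := fun n => St x y n) ((init_ex hX hY hAge x y).some)
    (fun n s => (step_ex hX hY hAge x y n s).choose) n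

omit [CompleteSpace X] [CompleteSpace Y] in
theorem seq_spec (n : ℕ) :
    (seq hX hY hAge x y n).A ≤ (seq hX hY hAge x y (n+1)).A ∧
    (seq hX hY hAge x y n).B ≤ (seq hX hY hAge x y (n+1)).B ∧
    ∀ b : (seq hX hY hAge x y n).B, ∀ hb : (b : Y) ∈ (seq hX hY hAge x y (n+1)).B,
      ‖(seq hX hY hAge x y (n+1)).ι ((seq hX hY hAge x y (n+1)).φ' ⟨(b : Y), hb⟩)
        - (seq hX hY hAge x y n).ι ((seq hX hY hAge x y n).φ' b)‖
        ≤ 16 * (1/2)^n * ‖(b : Y)‖ :=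
  (step_ex hX hY hAge x y n (seq hX hY hAge x y n)).choose_spec

include hX hY hAge in
set_option maxHeartbeats 4000000 in
theorem main (hx : DenseRange x) (hy : DenseRange y) : Nonempty (X ≃ₗᵢ[ℝ] Y) := by
  classical
  set S : ∀ n : ℕ, St x y n := seq hX hY hAge x y with hSdef
  have hA : ∀ n, (S n).A ≤ (S (n+1)).A := fun n => (seq_spec hX hY hAge x y n).1
  have hB : ∀ n, (S n).B ≤ (S (n+1)).B := fun n => (seq_spec hX hY hAge x y n).2.1
  have hcoh : ∀ n, ∀ b : (S n).B, ∀ hb : (b : Y) ∈ (S (n+1)).B,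
      ‖(S (n+1)).ι ((S (n+1)).φ' ⟨(b : Y), hb⟩) - (S n).ι ((S n).φ' b)‖
        ≤ 16 * (1/2)^n * ‖(b : Y)‖ := fun n => (seq_spec hX hY hAge x y n).2.2
  have hAmono : Monotone (fun n => (S n).A) := monotone_nat_of_le_succ hA
  have hBmono : Monotone (fun n => (S n).B) := monotone_nat_of_le_succ hB
  -- the union of the B's
  set D : Submodule ℝ Y := ⨆ n, (S n).B with hDdef
  have hmemD : ∀ v : Y, v ∈ D ↔ ∃ n, v ∈ (S n).B := fun v =>
    Submodule.mem_iSup_of_chain ⟨fun n => (S n).B, hBmono⟩ v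
  have hBD : ∀ n, (S n).B ≤ D := fun n => le_iSup (fun n => (S n).B) n
  -- the approximating maps
  set t : ℕ → D → X := fun n d =>
    if h : (d : Y) ∈ (S n).B then (S n).ι ((S n).φ' ⟨(d : Y), h⟩) else 0 with htdef
  have ht_mem : ∀ n (d : D) (h : (d : Y) ∈ (S n).B),
      t n d = (S n).ι ((S n).φ' ⟨(d : Y), h⟩) := by
    intro n d h
    simp only [htdef, dif_pos h]
  have hcn : ∀ n, (S n).η + (S n).β ≤ 2 * (1/2)^n := by
    intro n
    have h1 := (S n).hη
    have h2 := (S n).hβ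
    linarith
  have hcn2 : ∀ n, (S n).η + (S n).β ≤ 2 := by
    intro n
    have := hcn n
    have := half_pow_le_one n
    nlinarith [half_pow_pos n]
  -- uniform bounds on t
  have ht_ub : ∀ n (d : D), (d : Y) ∈ (S n).B → ‖t n d‖ ≤ Real.exp (2*(1/2)^n) * ‖(d : Y)‖ := by
    intro n d h
    rw [ht_mem n d h]
    have hcomp : IsEmbC (2*(1/2)^n) ((S n).ι.comp (S n).φ') :=
      (IsEmbC.comp (S n).hι (S n).hφ').mono (hcn n)
    have := (hcomp ⟨(d : Y), h⟩).2
    simpa [Submodule.coe_norm] using this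
  have ht_lb : ∀ n (d : D), (d : Y) ∈ (S n).B →
      Real.exp (-(2*(1/2)^n)) * ‖(d : Y)‖ ≤ ‖t n d‖ := by
    intro n d h
    rw [ht_mem n d h]
    have hcomp : IsEmbC (2*(1/2)^n) ((S n).ι.comp (S n).φ') :=
      (IsEmbC.comp (S n).hι (S n).hφ').mono (hcn n)
    have := (hcomp ⟨(d : Y), h⟩).1
    simpa [Submodule.coe_norm] using this
  have ht_bd : ∀ n (d : D), ‖t n d‖ ≤ 8 * ‖(d : Y)‖ := by
    intro n d
    by_cases h : (d : Y) ∈ (S n).B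
    · rw [ht_mem n d h]
      have hcomp : IsEmbC ((S n).η + (S n).β) ((S n).ι.comp (S n).φ') :=
        IsEmbC.comp (S n).hι (S n).hφ'
      have := IsEmbC.norm_apply_le (hcn2 n) hcomp ⟨(d : Y), h⟩
      simpa [Submodule.coe_norm] using this
    · simp only [htdef, dif_neg h, norm_zero]
      positivity
  have ht_succ : ∀ n (d : D), (d : Y) ∈ (S n).B →
      ‖t (n+1) d - t n d‖ ≤ 16 * (1/2)^n * ‖(d : Y)‖ := by
    intro n d h
    have h' : (d : Y) ∈ (S (n+1)).B := hB n h
    rw [ht_mem n d h, ht_mem (n+1) d h']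
    exact hcoh n ⟨(d : Y), h⟩ h'
  -- convergence of t
  have hcauchy : ∀ d : D, ∃ l : X, Tendsto (fun n => t n d) atTop (𝓝 l) := by
    intro d
    obtain ⟨N, hN⟩ := (hmemD (d : Y)).mp d.2
    have hC : ∀ n, dist (t n d) (t (n+1) d) ≤ (16 * 2^N * ‖(d : Y)‖) * (1/2)^n := by
      intro n
      rw [dist_eq_norm, norm_sub_rev]
      rcases le_or_gt N n with hn | hn
      · refine (ht_succ n d (hBmono hn hN)).trans ?_
        have h1 : (1:ℝ) ≤ 2^N := one_le_pow₀ one_le_two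
        calc 16*(1/2)^n*‖(d : Y)‖ = 1*(16*(1/2)^n*‖(d : Y)‖) := by ring
        _ ≤ 2^N*(16*(1/2)^n*‖(d : Y)‖) := by
            exact mul_le_mul_of_nonneg_right h1 (by positivity)
        _ = 16*2^N*‖(d : Y)‖*(1/2)^n := by ring
      · have h1 : ‖t (n+1) d - t n d‖ ≤ 16 * ‖(d : Y)‖ := by
          refine (norm_sub_le _ _).trans ?_
          have := ht_bd (n+1) d
          have := ht_bd n d
          linarith
        refine h1.trans ?_
        have h2 : (2:ℝ)^n ≤ 2^N := pow_le_pow_right₀ one_le_two hn.le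
        have h3 : ((1:ℝ)/2)^n = ((2:ℝ)^n)⁻¹ := by
          rw [div_pow, one_pow, inv_eq_one_div]
        have h4 : (1:ℝ) ≤ 2^N * (1/2)^n := by
          rw [h3, ← div_eq_mul_inv, le_div_iff₀ (by positivity)]
          simpa using h2
        calc 16*‖(d : Y)‖ = 1*(16*‖(d : Y)‖) := by ring
        _ ≤ (2^N*(1/2)^n)*(16*‖(d : Y)‖) := by
            exact mul_le_mul_of_nonneg_right h4 (by positivity)
        _ = 16*2^N*‖(d : Y)‖*(1/2)^n := by ring
    have := cauchySeq_of_le_geometric (1/2) (16 * 2^N * ‖(d : Y)‖) (by norm_num) hC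
    exact cauchySeq_tendsto_of_complete this
  set g : D → X := fun d => (hcauchy d).choose with hgdef
  have hg : ∀ d : D, Tendsto (fun n => t n d) atTop (𝓝 (g d)) :=
    fun d => (hcauchy d).choose_spec
  -- additivity
  have hgadd : ∀ d₁ d₂ : D, g (d₁ + d₂) = g d₁ + g d₂ := by
    intro d₁ d₂
    obtain ⟨N₁, hN₁⟩ := (hmemD (d₁ : Y)).mp d₁.2
    obtain ⟨N₂, hN₂⟩ := (hmemD (d₂ : Y)).mp d₂.2
    refine tendsto_nhds_unique (hg (d₁ + d₂)) (Tendsto.congr' ?_ ((hg d₁).add (hg d₂)))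
    refine eventually_atTop.mpr ⟨max N₁ N₂, fun n hn => ?_⟩
    have h1 : (d₁ : Y) ∈ (S n).B := hBmono (le_trans (le_max_left _ _) hn) hN₁
    have h2 : (d₂ : Y) ∈ (S n).B := hBmono (le_trans (le_max_right _ _) hn) hN₂
    have h3 : ((d₁ + d₂ : D) : Y) ∈ (S n).B := by
      have : ((d₁ + d₂ : D) : Y) = (d₁ : Y) + (d₂ : Y) := rfl
      rw [this]; exact add_mem h1 h2
    show t n d₁ + t n d₂ = t n (d₁ + d₂)
    rw [ht_mem n d₁ h1, ht_mem n d₂ h2, ht_mem n (d₁ + d₂) h3]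
    have h4 : (⟨((d₁ + d₂ : D) : Y), h3⟩ : (S n).B)
        = (⟨(d₁ : Y), h1⟩ : (S n).B) + ⟨(d₂ : Y), h2⟩ := by
      ext; rfl
    rw [h4, map_add, map_add]
  -- homogeneity
  have hgsmul : ∀ (c : ℝ) (d : D), g (c • d) = c • g d := by
    intro c d
    obtain ⟨N, hN⟩ := (hmemD (d : Y)).mp d.2
    refine tendsto_nhds_unique (hg (c • d)) (Tendsto.congr' ?_ ((hg d).const_smul c))
    refine eventually_atTop.mpr ⟨N, fun n hn => ?_⟩
    have h1 : (d : Y) ∈ (S n).B := hBmono hn hN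
    have h3 : ((c • d : D) : Y) ∈ (S n).B := by
      have : ((c • d : D) : Y) = c • (d : Y) := rfl
      rw [this]; exact Submodule.smul_mem _ c h1
    show c • t n d = t n (c • d)
    rw [ht_mem n d h1, ht_mem n (c • d) h3]
    have h4 : (⟨((c • d : D) : Y), h3⟩ : (S n).B) = c • (⟨(d : Y), h1⟩ : (S n).B) := by
      ext; rfl
    rw [h4, map_smul, map_smul]
  -- isometry property
  have hhalf0 : Tendsto (fun n : ℕ => ((1:ℝ)/2)^n) atTop (𝓝 0) :=
    tendsto_pow_atTop_nhds_zero_of_lt_one (by norm_num) (by norm_num)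
  have h20 : Tendsto (fun n : ℕ => 2 * ((1:ℝ)/2)^n) atTop (𝓝 0) := by
    simpa using hhalf0.const_mul 2
  have hgnorm : ∀ d : D, ‖g d‖ = ‖(d : Y)‖ := by
    intro d
    obtain ⟨N, hN⟩ := (hmemD (d : Y)).mp d.2
    have hnt : Tendsto (fun n => ‖t n d‖) atTop (𝓝 ‖g d‖) := (hg d).norm
    have hub : Tendsto (fun n : ℕ => Real.exp (2*(1/2)^n) * ‖(d : Y)‖) atTop
        (𝓝 ‖(d : Y)‖) := by
      have h2 := (Real.continuous_exp.tendsto 0).comp h20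
      simpa using h2.mul_const ‖(d : Y)‖
    have hlb : Tendsto (fun n : ℕ => Real.exp (-(2*(1/2)^n)) * ‖(d : Y)‖) atTop
        (𝓝 ‖(d : Y)‖) := by
      have h21 : Tendsto (fun n : ℕ => -(2 * ((1:ℝ)/2)^n)) atTop (𝓝 0) := by
        simpa using h20.neg
      have h2 := (Real.continuous_exp.tendsto 0).comp h21
      simpa using h2.mul_const ‖(d : Y)‖
    have hle : ‖g d‖ ≤ ‖(d : Y)‖ := by
      refine le_of_tendsto_of_tendsto hnt hub ?_
      refine eventually_atTop.mpr ⟨N, fun n hn => ht_ub n d (hBmono hn hN)⟩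
    have hge : ‖(d : Y)‖ ≤ ‖g d‖ := by
      refine le_of_tendsto_of_tendsto hlb hnt ?_
      refine eventually_atTop.mpr ⟨N, fun n hn => ht_lb n d (hBmono hn hN)⟩
    linarith
  -- tail estimate
  have htail : ∀ n (d : D), (d : Y) ∈ (S n).B →
      ‖g d - t n d‖ ≤ 32 * (1/2)^n * ‖(d : Y)‖ := by
    intro n d h
    have haux : ∀ k, ‖t (k + n) d - t n d‖
        ≤ 32 * (1/2)^n * (1 - (1/2)^k) * ‖(d : Y)‖ := by
      intro k
      induction k with
      | zero => simp
      | succ k ih =>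
        have hmem : (d : Y) ∈ (S (k + n)).B := hBmono (Nat.le_add_left n k) h
        have hstep := ht_succ (k + n) d hmem
        have hdec : t (k+1+n) d - t n d = (t (k+n+1) d - t (k+n) d) + (t (k+n) d - t n d) := by
          have : k+1+n = k+n+1 := by omega
          rw [this]; abel
        rw [hdec]
        refine (norm_add_le _ _).trans ?_
        have h2 : (16:ℝ) * (1/2)^(k+n) * ‖(d : Y)‖ + 32 * (1/2)^n * (1 - (1/2)^k) * ‖(d : Y)‖
            = 32 * (1/2)^n * (1 - (1/2)^(k+1)) * ‖(d : Y)‖ := by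
          rw [pow_add, pow_succ]
          ring
        linarith [hstep, ih]
    have hlim : Tendsto (fun k => ‖t (k + n) d - t n d‖) atTop (𝓝 ‖g d - t n d‖) := by
      have h1 : Tendsto (fun k => t (k + n) d) atTop (𝓝 (g d)) :=
        (hg d).comp (tendsto_add_atTop_nat n)
      exact (h1.sub_const (t n d)).norm
    refine le_of_tendsto hlim ?_
    refine Eventually.of_forall fun k => ?_
    refine (haux k).trans ?_
    have h1 : (0:ℝ) ≤ (1/2)^k := (half_pow_pos k).le
    nlinarith [mul_nonneg (mul_nonneg (mul_nonneg (by norm_num : (0:ℝ) ≤ 32)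
      (half_pow_pos n).le) h1) (norm_nonneg (d : Y))]
  -- bundle g as a linear isometry on D
  set glin : D →ₗ[ℝ] X :=
    { toFun := g, map_add' := hgadd, map_smul' := hgsmul } with hglindef
  set gli : D →ₗᵢ[ℝ] X :=
    ⟨glin, fun d => hgnorm d⟩ with hglidef
  -- density of D
  have hDdense : Dense (D : Set Y) := by
    refine Dense.mono ?_ hy
    rintro v ⟨n, rfl⟩
    exact hBD n (S n).hyB
  have hde : DenseRange (D.subtypeL : D →L[ℝ] Y) := by
    have : Set.range (D.subtypeL : D →L[ℝ] Y) = (D : Set Y) := Subtype.range_val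
    rw [DenseRange, this]
    exact hDdense
  have hui : IsUniformInducing (D.subtypeL : D →L[ℝ] Y) := isometry_subtype_coe.isUniformInducing
  set gext : Y →L[ℝ] X := gli.toContinuousLinearMap.extend D.subtypeL with hgextdef
  have hgext_eq : ∀ d : D, gext (d : Y) = g d := by
    intro d
    exact ContinuousLinearMap.extend_eq gli.toContinuousLinearMap hde hui d
  have hgext_iso : ∀ v : Y, ‖gext v‖ = ‖v‖ := by
    intro v
    have hclosed : IsClosed {w : Y | ‖gext w‖ = ‖w‖} :=
      isClosed_eq (continuous_norm.comp gext.continuous) continuous_norm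
    have hsub : (D : Set Y) ⊆ {w : Y | ‖gext w‖ = ‖w‖} := by
      intro w hw
      have := hgext_eq ⟨w, hw⟩
      simp only [Set.mem_setOf_eq, this]
      rw [hgnorm ⟨w, hw⟩]
    have : closure (D : Set Y) ⊆ {w : Y | ‖gext w‖ = ‖w‖} :=
      hclosed.closure_subset_iff.mpr hsub
    exact this (by rw [hDdense.closure_eq]; trivial)
  set G : Y →ₗᵢ[ℝ] X := ⟨gext.toLinearMap, hgext_iso⟩ with hGdef
  -- surjectivity of G
  have hGclosed : IsClosed (Set.range G) :=
    (G.isometry.isClosedEmbedding).isClosed_range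
  have hxsub : Set.range x ⊆ Set.range G := by
    rw [← hGclosed.closure_eq]
    rintro - ⟨k, rfl⟩
    rw [Metric.mem_closure_iff]
    intro ε hε
    -- choose n large
    have hεpos : 0 < ε / (300 * (‖x k‖ + 1)) := by positivity
    obtain ⟨n₀, hn₀⟩ := exists_pow_lt_of_lt_one hεpos (show (1:ℝ)/2 < 1 by norm_num)
    set n : ℕ := max n₀ k with hndef
    have hnk : k ≤ n := le_max_right _ _
    have hpow : ((1:ℝ)/2)^n ≤ (1/2)^n₀ :=
      pow_le_pow_of_le_one (by norm_num) (by norm_num) (le_max_left _ _)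
    have hxn : x k ∈ (S n).A := hAmono hnk (S k).hxA
    obtain ⟨h, hh8, hhnear⟩ := (S n).hsurj
    set a : (S n).A := ⟨x k, hxn⟩ with hadef
    set b : (S n).B := h a with hbdef
    have hbD : (b : Y) ∈ D := hBD n b.2
    set d : D := ⟨(b : Y), hbD⟩ with hddef
    have hdb : (d : Y) ∈ (S n).B := b.2
    -- the approximation estimates
    have e1 : ‖x k - (S n).ι ((S n).φ' b)‖ ≤ (1/2)^n * ‖x k‖ := by
      have h1 := ((S n).A.subtypeL - (S n).ι.comp ((S n).φ'.comp h)).le_opNorm a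
      have heval : ((S n).A.subtypeL - (S n).ι.comp ((S n).φ'.comp h)) a
          = x k - (S n).ι ((S n).φ' b) := by
        simp [hadef, hbdef, ContinuousLinearMap.sub_apply]
      rw [heval] at h1
      refine h1.trans ?_
      have h2 : ‖a‖ = ‖x k‖ := by rw [Submodule.coe_norm]
      rw [h2]
      exact mul_le_mul_of_nonneg_right hhnear (norm_nonneg _)
    have e2 : ‖g d - t n d‖ ≤ 32 * (1/2)^n * ‖(d : Y)‖ := htail n d hdb
    have e3 : t n d = (S n).ι ((S n).φ' b) := by
      rw [ht_mem n d hdb]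
    have e4 : ‖(d : Y)‖ ≤ 8 * ‖x k‖ := by
      have h2 : ‖(d : Y)‖ = ‖b‖ := (Submodule.coe_norm b).symm
      have h5 : ‖a‖ = ‖x k‖ := Submodule.coe_norm a
      rw [h2, hbdef]
      refine (h.le_opNorm a).trans ?_
      rw [h5]
      exact mul_le_mul_of_nonneg_right hh8 (norm_nonneg _)
    refine ⟨G (d : Y), ⟨(d : Y), rfl⟩, ?_⟩
    have hGd : G (d : Y) = g d := by
      have : G (d : Y) = gext (d : Y) := rfl
      rw [this, hgext_eq]
    rw [dist_eq_norm, hGd]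
    calc ‖x k - g d‖ ≤ ‖x k - (S n).ι ((S n).φ' b)‖ + ‖g d - t n d‖ := by
          rw [e3]
          have : x k - g d = (x k - (S n).ι ((S n).φ' b)) - (g d - (S n).ι ((S n).φ' b)) := by
            abel
          rw [this]
          exact (norm_sub_le _ _).trans (by rw [norm_sub_rev (g d)])
      _ ≤ (1/2)^n * ‖x k‖ + 32 * (1/2)^n * (8 * ‖x k‖) := by
          refine add_le_add e1 (e2.trans ?_)
          exact mul_le_mul_of_nonneg_left e4 (by positivity)
      _ ≤ 300 * (‖x k‖ + 1) * (1/2)^n₀ := by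
          nlinarith [norm_nonneg (x k), half_pow_pos n, half_pow_pos n₀, hpow]
      _ < ε := by
          rw [lt_div_iff₀ (by positivity : (0:ℝ) < 300 * (‖x k‖ + 1))] at hn₀
          linarith [hn₀]
  have hGsurj : Function.Surjective G := by
    have hdense : Dense (Set.range G) := Dense.mono hxsub hx
    have : Set.range G = Set.univ := by
      rw [← hGclosed.closure_eq, hdense.closure_eq]
    intro v
    have : v ∈ Set.range G := by rw [this]; trivial
    exact this
  exact ⟨(LinearIsometryEquiv.ofSurjective G hGsurj).symm⟩

end Limit

end GFProof


/-- Two separable Banach spaces satisfying (gF-2) with the same closed age are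
linearly isometric. -/
theorem guardedFraisse_unique_by_age (X Y : Type*)
    [NormedAddCommGroup X] [NormedSpace ℝ X] [CompleteSpace X]
    [TopologicalSpace.SeparableSpace X]
    [NormedAddCommGroup Y] [NormedSpace ℝ Y] [CompleteSpace Y]
    [TopologicalSpace.SeparableSpace Y]
    (hX : GF2 X) (hY : GF2 Y)
    (hAge : ∀ F : FinNormedSpace, FinRep F X ↔ FinRep F Y) :
    Nonempty (X ≃ₗᵢ[ℝ] Y) := by
  haveI : Nonempty X := ⟨0⟩
  haveI : Nonempty Y := ⟨0⟩
  exact GFProof.main hX hY hAge (TopologicalSpace.denseSeq X) (TopologicalSpace.denseSeq Y)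
    (TopologicalSpace.denseRange_denseSeq X) (TopologicalSpace.denseRange_denseSeq Y)
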